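/- Let f : ℤ → ℚ be a function and suppose there exists a polynomial P ∈ ℚ[x,y] such that f(a − b) = P(a,b) for all natural numbers a, b ≥ 0. Then there exists a polynomial p ∈ ℚ[t] such that f(c) = p(c) for all integers c; equivalently, a function of ℤ which is polynomial in (a,b) on the set of differences a − b with a, b ≥ 0 is itself a polynomial function of the difference. -/

import Mathlib

open scoped BigOperators

/-- A graph of genus `g` with `n` legs: vertices, half-edges, an involution,
a root map, a list of `n` legs which are exactly the fixed points of the
involution, and a genus function. -/
structure LegGraph (n : ℕ) where
  V : Type
  H : Type
  [fintypeV : Fintype V]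
  [fintypeH : Fintype H]
  [decEqV : DecidableEq V]
  [decEqH : DecidableEq H]
  ι : H → H
  ι_invol : ∀ h, ι (ι h) = h
  root : H → V
  leg : Fin n → H
  leg_inj : Function.Injective leg
  leg_iff : ∀ h, ι h = h ↔ ∃ i, leg i = h
  genus : V → ℕ

attribute [instance] LegGraph.fintypeV LegGraph.fintypeH LegGraph.decEqV LegGraph.decEqH

namespace LegGraph

variable {n : ℕ}

/-- Connectedness: the equivalence relation on `V` generated by relating `r h` and
`r (i h)` has exactly one class. -/
def Connected (G : LegGraph n) : Prop :=
  ∀ v w : G.V, Relation.EqvGen (fun a b => ∃ h : G.H, G.root h = a ∧ G.root (G.ι h) = b) v w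

/-- The number of edges: pairs `{h, ι h}` with `ι h ≠ h`. -/
def edgeCard (G : LegGraph n) : ℕ :=
  (Finset.univ.filter fun h : G.H => G.ι h ≠ h).card / 2

/-- The first Betti number `#E - #V + 1` (as an integer). -/
def h1 (G : LegGraph n) : ℤ :=
  (G.edgeCard : ℤ) - (Fintype.card G.V : ℤ) + 1

/-- The number `n(v)` of half-edges rooted at a vertex `v`. -/
def deg (G : LegGraph n) (v : G.V) : ℕ :=
  (Finset.univ.filter fun h : G.H => G.root h = v).card

/-- The (total) genus of the graph: `∑ g(v) + h¹(Γ)`. -/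
def genusTot (G : LegGraph n) : ℤ :=
  (∑ v : G.V, (G.genus v : ℤ)) + G.h1

/-- A weighting for `A` mod `r` (with twist `k`). -/
def IsWeighting (G : LegGraph n) (k : ℤ) (A : Fin n → ℤ) (r : ℕ) (w : G.H → Fin r) : Prop :=
  (∀ i : Fin n, ((w (G.leg i) : ℕ) : ℤ) % (r : ℤ) = A i % (r : ℤ)) ∧
  (∀ h : G.H, G.ι h ≠ h → (((w h : ℕ) : ℤ) + ((w (G.ι h) : ℕ) : ℤ)) % (r : ℤ) = 0) ∧
  (∀ v : G.V,
    (∑ h ∈ Finset.univ.filter (fun h : G.H => G.root h = v), ((w h : ℕ) : ℤ)) % (r : ℤ)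
      = (k * (2 * (G.genus v : ℤ) - 2 + (G.deg v : ℤ))) % (r : ℤ))

open scoped Classical in
/-- The finite set `W^Γ_{A,r}` of weightings for `A` mod `r` (with twist `k`). -/
noncomputable def weightings (G : LegGraph n) (k : ℤ) (A : Fin n → ℤ) (r : ℕ) :
    Finset (G.H → Fin r) :=
  Finset.univ.filter fun w => G.IsWeighting k A r w

/-- The non-leg half-edges, indexing the variables of the polynomials `Q`. -/
def NonLeg (G : LegGraph n) : Type := {h : G.H // G.ι h ≠ h}

/-- The sum `S^Γ_{A,r}(Q) = r^{-h¹(Γ)} ∑_{w ∈ W^Γ_{A,r}} Q((w h)_h)`. -/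
noncomputable def S (G : LegGraph n) (k : ℤ) (A : Fin n → ℤ)
    (Q : MvPolynomial G.NonLeg ℤ) (r : ℕ) : ℚ :=
  (r : ℚ) ^ (-G.h1) * ∑ w ∈ G.weightings k A r,
    ((MvPolynomial.eval (fun h : G.NonLeg => ((w h.1 : ℕ) : ℤ)) Q : ℤ) : ℚ)

end LegGraph

/-- A function `ℕ → ℚ` is eventually polynomial. -/
def EvPoly (f : ℕ → ℚ) : Prop :=
  ∃ p : Polynomial ℚ, ∃ N : ℕ, ∀ r : ℕ, N ≤ r → f r = p.eval (r : ℚ)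

open scoped Classical in
/-- The constant term of the polynomial expression of an eventually polynomial function
(junk value `0` otherwise).  When `EvPoly f` holds this is well defined, i.e. independent
of the choice of polynomial. -/
noncomputable def constTerm (f : ℕ → ℚ) : ℚ :=
  if h : EvPoly f then (Classical.choose h).eval 0 else 0

/-- `S^Γ_{A,0}(Q)`: the constant term of the eventually polynomial function
`r ↦ S^Γ_{A,r}(Q)`. -/
noncomputable def LegGraph.S0 {n : ℕ} (G : LegGraph n) (k : ℤ) (A : Fin n → ℤ)
    (Q : MvPolynomial G.NonLeg ℤ) : ℚ :=
  constTerm fun r => G.S k A Q r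

/-- `m mod r` as an element of `Fin r = {0, …, r-1}`, for an integer `m`. -/
def intFin (r : ℕ) (hr : 0 < r) (m : ℤ) : Fin r :=
  ⟨(m % (r : ℤ)).toNat, by
    have h0 : (0 : ℤ) < (r : ℤ) := by exact_mod_cast hr
    have h1 : m % (r : ℤ) < (r : ℤ) := Int.emod_lt_of_pos m h0
    have h2 : 0 ≤ m % (r : ℤ) := Int.emod_nonneg m (by omega)
    omega⟩
namespace LegGraph

variable {n : ℕ}

theorem not_leg_of_not_fixed (G : LegGraph n) {h : G.H} (hh : G.ι h ≠ h) :
    ∀ i, G.leg i ≠ h :=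
  fun i hi => hh ((G.leg_iff h).2 ⟨i, hi⟩)

/-- The graph `Γ_e` obtained by cutting the edge `e = {h₁, h₂}`: the involution now fixes
`h₁` and `h₂`, which become the two new legs `ℓ_{n+1} = h₁` and `ℓ_{n+2} = h₂`. -/
def cut (G : LegGraph n) (h₁ h₂ : G.H) (he : G.ι h₁ = h₂) (hne : h₁ ≠ h₂) :
    LegGraph (n + 2) where
  V := G.V
  H := G.H
  ι h := if h = h₁ then h₁ else if h = h₂ then h₂ else G.ι h
  ι_invol := by
    have he' : G.ι h₂ = h₁ := by rw [← he, G.ι_invol]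
    intro h
    rcases eq_or_ne h h₁ with rfl | e1
    · simp
    · rcases eq_or_ne h h₂ with rfl | e2
      · simp [Ne.symm hne]
      · have hι1 : G.ι h ≠ h₁ := by
          intro hh
          exact e2 (by rw [← G.ι_invol h, hh, he])
        have hι2 : G.ι h ≠ h₂ := by
          intro hh
          exact e1 (by rw [← G.ι_invol h, hh, he'])
        simp [e1, e2, hι1, hι2, G.ι_invol]
  root := G.root
  leg := Fin.snoc (Fin.snoc G.leg h₁) h₂
  leg_inj := by
    have hb₁ : G.ι h₁ ≠ h₁ := by rw [he]; exact Ne.symm hne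
    have he' : G.ι h₂ = h₁ := by rw [← he, G.ι_invol]
    have hb₂ : G.ι h₂ ≠ h₂ := by rw [he']; exact hne
    have hl₁ := G.not_leg_of_not_fixed hb₁
    have hl₂ := G.not_leg_of_not_fixed hb₂
    intro i j hij
    induction i using Fin.lastCases with
    | last =>
      induction j using Fin.lastCases with
      | last => rfl
      | cast j =>
        rw [Fin.snoc_last, Fin.snoc_castSucc] at hij
        induction j using Fin.lastCases with
        | last => rw [Fin.snoc_last] at hij; exact absurd hij.symm hne
        | cast j => rw [Fin.snoc_castSucc] at hij; exact absurd hij.symm (hl₂ j)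
    | cast i =>
      induction j using Fin.lastCases with
      | last =>
        rw [Fin.snoc_last, Fin.snoc_castSucc] at hij
        induction i using Fin.lastCases with
        | last => rw [Fin.snoc_last] at hij; exact absurd hij hne
        | cast i => rw [Fin.snoc_castSucc] at hij; exact absurd hij (hl₂ i)
      | cast j =>
        rw [Fin.snoc_castSucc, Fin.snoc_castSucc] at hij
        induction i using Fin.lastCases with
        | last =>
          induction j using Fin.lastCases with
          | last => rfl
          | cast j =>
            rw [Fin.snoc_last, Fin.snoc_castSucc] at hij
            exact absurd hij.symm (hl₁ j)
        | cast i =>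
          induction j using Fin.lastCases with
          | last =>
            rw [Fin.snoc_last, Fin.snoc_castSucc] at hij
            exact absurd hij (hl₁ i)
          | cast j =>
            rw [Fin.snoc_castSucc, Fin.snoc_castSucc] at hij
            rw [G.leg_inj hij]
  genus := G.genus
  leg_iff := by
    have hb₁ : G.ι h₁ ≠ h₁ := by rw [he]; exact Ne.symm hne
    have he' : G.ι h₂ = h₁ := by rw [← he, G.ι_invol]
    intro h
    constructor
    · intro hfix
      rcases eq_or_ne h h₁ with rfl | e1
      · exact ⟨(Fin.last n).castSucc, by
          rw [Fin.snoc_castSucc, Fin.snoc_last]⟩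
      · rcases eq_or_ne h h₂ with rfl | e2
        · exact ⟨Fin.last (n + 1), by rw [Fin.snoc_last]⟩
        · simp only [if_neg e1, if_neg e2] at hfix
          obtain ⟨i, hi⟩ := (G.leg_iff h).1 hfix
          exact ⟨i.castSucc.castSucc, by rw [Fin.snoc_castSucc, Fin.snoc_castSucc]; exact hi⟩
    · rintro ⟨i, rfl⟩
      induction i using Fin.lastCases with
      | last =>
        rw [Fin.snoc_last]
        simp [Ne.symm hne]
      | cast i =>
        rw [Fin.snoc_castSucc]
        induction i using Fin.lastCases with
        | last => rw [Fin.snoc_last]; simp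
        | cast i =>
          rw [Fin.snoc_castSucc]
          have h1 := G.not_leg_of_not_fixed hb₁ i
          have h2 := G.not_leg_of_not_fixed (show G.ι h₂ ≠ h₂ by rw [he']; exact hne) i
          show (if G.leg i = h₁ then h₁ else if G.leg i = h₂ then h₂ else G.ι (G.leg i))
              = G.leg i
          rw [if_neg h1, if_neg h2]
          exact (G.leg_iff (G.leg i)).2 ⟨i, rfl⟩

end LegGraph
namespace LegGraph

variable {n : ℕ}

/-- The graph `Γ'` obtained from `Γ` by attaching one new leg at every vertex. -/
noncomputable def addLegs (G : LegGraph n) : LegGraph (n + Fintype.card G.V) where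
  V := G.V
  H := G.H ⊕ G.V
  ι := Sum.map G.ι id
  ι_invol := by rintro (h | v) <;> simp [G.ι_invol]
  root := Sum.elim G.root id
  leg i :=
    if hi : (i : ℕ) < n then Sum.inl (G.leg ⟨(i : ℕ), hi⟩)
    else Sum.inr ((Fintype.equivFin G.V).symm ⟨(i : ℕ) - n, by have := i.isLt; omega⟩)
  leg_inj := by
    intro i j hij
    beta_reduce at hij
    by_cases hi : (i : ℕ) < n <;> by_cases hj : (j : ℕ) < n
    · rw [dif_pos hi, dif_pos hj] at hij
      have h2 := G.leg_inj (Sum.inl_injective hij)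
      have h3 : (i : ℕ) = (j : ℕ) := by simpa using congrArg Fin.val h2
      exact Fin.ext h3
    · rw [dif_pos hi, dif_neg hj] at hij
      exact absurd hij (by simp)
    · rw [dif_neg hi, dif_pos hj] at hij
      exact absurd hij (by simp)
    · rw [dif_neg hi, dif_neg hj] at hij
      have h2 := (Fintype.equivFin G.V).symm.injective (Sum.inr_injective hij)
      have h3 : (i : ℕ) - n = (j : ℕ) - n := by simpa using congrArg Fin.val h2
      exact Fin.ext (by omega)
  leg_iff := by
    rintro (h | v)
    · constructor
      · intro hfix
        have : G.ι h = h := Sum.inl_injective hfix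
        obtain ⟨i, hi⟩ := (G.leg_iff h).1 this
        refine ⟨⟨(i : ℕ), by have := i.isLt; omega⟩, ?_⟩
        beta_reduce
        rw [dif_pos i.isLt]
        exact congrArg Sum.inl (by rw [show (⟨(i : ℕ), i.isLt⟩ : Fin n) = i from rfl, hi])
      · rintro ⟨i, hi⟩
        beta_reduce at hi
        by_cases h' : (i : ℕ) < n
        · rw [dif_pos h'] at hi
          have := Sum.inl_injective hi
          have hfix : G.ι h = h := (G.leg_iff h).2 ⟨⟨(i : ℕ), h'⟩, this⟩
          exact congrArg Sum.inl hfix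
        · rw [dif_neg h'] at hi
          exact absurd hi (by simp)
    · constructor
      · intro _
        refine ⟨⟨n + (Fintype.equivFin G.V v : ℕ), by
            have := (Fintype.equivFin G.V v).isLt; omega⟩, ?_⟩
        beta_reduce
        rw [dif_neg (by simp only [Fin.val_mk]; omega)]
        refine congrArg Sum.inr ?_
        rw [Equiv.symm_apply_eq]
        exact Fin.ext (by simp)
      · intro _
        rfl
  genus := G.genus

end LegGraph
/-- The data exhibiting an edge `e = {h₁, h₂}` of `Γ` as a separating edge splitting `Γ`
into two connected graphs `Γ₁` (containing the root of `h₁`, with one new leg `ℓ'` at the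
root of `h₁`, placed last) and `Γ₂` (containing the root of `h₂`, with one new leg `ℓ''`
at the root of `h₂`, placed last). -/
structure EdgeSplit {n n₁ n₂ : ℕ} (G : LegGraph n) (G₁ : LegGraph (n₁ + 1))
    (G₂ : LegGraph (n₂ + 1)) (h₁ h₂ : G.H) where
  he : G.ι h₁ = h₂
  hne : h₁ ≠ h₂
  conn : G.Connected
  conn₁ : G₁.Connected
  conn₂ : G₂.Connected
  eV : G.V ≃ G₁.V ⊕ G₂.V
  eH : G.H ≃ G₁.H ⊕ G₂.H
  σ : Fin n ≃ Fin n₁ ⊕ Fin n₂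
  map_h₁ : eH h₁ = Sum.inl (G₁.leg (Fin.last n₁))
  map_h₂ : eH h₂ = Sum.inr (G₂.leg (Fin.last n₂))
  ι_compat : ∀ h : G.H, h ≠ h₁ → h ≠ h₂ → eH (G.ι h) = Sum.map G₁.ι G₂.ι (eH h)
  root_compat : ∀ h : G.H, eV (G.root h) = Sum.map G₁.root G₂.root (eH h)
  leg_compat : ∀ i : Fin n, eH (G.leg i) =
    Sum.map (fun j : Fin n₁ => G₁.leg j.castSucc) (fun j : Fin n₂ => G₂.leg j.castSucc) (σ i)
  genus_compat : ∀ v : G.V, G.genus v = Sum.elim G₁.genus G₂.genus (eV v)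

/-- The class of graphs obtained from a given graph by repeatedly cutting edges. -/
inductive CutDesc : {m : ℕ} → LegGraph m → {m' : ℕ} → LegGraph m' → Prop
  | refl {m : ℕ} (G : LegGraph m) : CutDesc G G
  | cut {m m' : ℕ} (G : LegGraph m) (G' : LegGraph m') (h₁ h₂ : G'.H)
      (he : G'.ι h₁ = h₂) (hne : h₁ ≠ h₂) :
      CutDesc G G' → CutDesc G (G'.cut h₁ h₂ he hne)

/-- The class of graphs obtained from a given graph by adding legs and repeatedly
cutting edges. -/
inductive Desc : {m : ℕ} → LegGraph m → {m' : ℕ} → LegGraph m' → Prop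
  | refl {m : ℕ} (G : LegGraph m) : Desc G G
  | cut {m m' : ℕ} (G : LegGraph m) (G' : LegGraph m') (h₁ h₂ : G'.H)
      (he : G'.ι h₁ = h₂) (hne : h₁ ≠ h₂) :
      Desc G G' → Desc G (G'.cut h₁ h₂ he hne)
  | addLegs {m m' : ℕ} (G : LegGraph m) (G' : LegGraph m') :
      Desc G G' → Desc G G'.addLegs

lemma aux_zero_of_nat_roots (p : Polynomial ℚ) (h : ∀ n : ℕ, p.eval (n : ℚ) = 0) : p = 0 := by
  apply Polynomial.eq_zero_of_infinite_isRoot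
  exact Set.infinite_of_injective_forall_mem (f := fun n : ℕ => (n : ℚ))
    Nat.cast_injective (fun n => h n)

lemma aux_eval_aeval (P : MvPolynomial (Fin 2) ℚ) (g : Fin 2 → Polynomial ℚ) (x : ℚ) :
    (MvPolynomial.aeval g P).eval x = MvPolynomial.eval (fun i => (g i).eval x) P := by
  have := MvPolynomial.comp_aeval_apply (R := ℚ) (σ := Fin 2) (S₁ := Polynomial ℚ) (B := ℚ) (f := g) (Polynomial.aeval x) P
  simp only [Polynomial.coe_aeval_eq_eval] at this
  exact this.trans rfl

theorem polynomial_in_difference (f : ℤ → ℚ)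
    (h : ∃ P : MvPolynomial (Fin 2) ℚ, ∀ a b : ℕ,
      f ((a : ℤ) - (b : ℤ)) = MvPolynomial.eval ![(a : ℚ), (b : ℚ)] P) :
    ∃ p : Polynomial ℚ, ∀ c : ℤ, f c = p.eval ((c : ℤ) : ℚ) := by
  obtain ⟨P, hP⟩ := h
  refine ⟨MvPolynomial.aeval ![Polynomial.X, 0] P, ?_⟩
  intro c
  have hqe : ∀ x : ℚ,
      (MvPolynomial.aeval ![Polynomial.X, 0] P).eval x = MvPolynomial.eval ![x, 0] P := by
    intro x
    rw [aux_eval_aeval]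
    have he : (fun i => (![Polynomial.X, (0:Polynomial ℚ)] i).eval x) = ![x, 0] := by
      funext i; fin_cases i <;> simp
    rw [he]
  rcases le_or_gt 0 c with hc | hc
  · lift c to ℕ using hc
    have := hP c 0
    rw [hqe]
    simpa using this
  · obtain ⟨m, rfl⟩ : ∃ m : ℕ, c = -(m : ℤ) := ⟨c.natAbs, by omega⟩
    set v : Polynomial ℚ :=
      MvPolynomial.aeval ![Polynomial.X, Polynomial.X + Polynomial.C (m : ℚ)] P with hv
    have hve : ∀ x : ℚ, v.eval x = MvPolynomial.eval ![x, x + m] P := by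
      intro x
      rw [hv, aux_eval_aeval]
      have he : (fun i => (![Polynomial.X, Polynomial.X + Polynomial.C (m:ℚ)] i).eval x)
          = ![x, x + m] := by
        funext i; fin_cases i <;> simp
      rw [he]
    have hconst : v = Polynomial.C (f (-(m : ℤ))) := by
      have hz : v - Polynomial.C (f (-(m : ℤ))) = 0 := by
        apply aux_zero_of_nat_roots
        intro s
        have h1 := hP s (s + m)
        have h2 : ((s : ℤ) - ((s + m : ℕ) : ℤ)) = -(m : ℤ) := by push_cast; ring
        rw [h2] at h1
        have h3 : v.eval (s : ℚ) = f (-(m : ℤ)) := by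
          rw [hve, h1]
          have he : (![(s:ℚ), s + m] : Fin 2 → ℚ) = ![(s:ℚ), ((s+m:ℕ):ℚ)] := by
            funext i; fin_cases i <;> push_cast <;> ring
          rw [he]
        simp [h3]
      exact sub_eq_zero.mp hz
    have h4 := hve (-(m : ℚ))
    rw [hconst] at h4
    simp only [Polynomial.eval_C] at h4
    rw [hqe, h4]
    have he : (![(((-(m : ℤ)) : ℤ) : ℚ), 0] : Fin 2 → ℚ) = ![-(m : ℚ), -(m : ℚ) + m] := by
      funext i; fin_cases i <;> push_cast <;> ring
    rw [he]
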